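/- Let γ ∈ (0,1], H ≥ 1, and a > 4H/γ. Suppose C ≥ 4aγ(1−γ²)/(aγ − 4H) and define η̃_t = 1/(a+t). If a sequence b_i (memory at synchronization times t_(i) with t_(i+1) − t_(i) ≤ H) satisfies b_{i+1} ≤ (1 − γ/2) b_i + (2(1−γ²)/γ) η̃_{t_(i)}² A with b_1 ≤ (1−γ) η̃_0² A, then b_i ≤ C (η̃_{t_(i)}²/γ²) A for all i ≥ 1. -/

import Mathlib

set_option maxHeartbeats 1000000 in
/-- Memory contraction induction (decaying learning rate, `p = 2`): under the
recursion `b_{i+1} ≤ (1-γ/2) b_i + (2(1-γ²)/γ) η̃_{t_i}² A` with `η̃_t = 1/(a+t)`,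
gaps `t_{i+1} - t_i ≤ H`, base case `b_1 ≤ (1-γ) η̃_0² A`, and
`C ≥ 4aγ(1-γ²)/(aγ-4H)`, we have `b_i ≤ C η̃_{t_i}²/γ² · A` for all `i ≥ 1`. -/
theorem memory_contraction_induction (γ : ℝ) (hγ : γ ∈ Set.Ioc (0 : ℝ) 1)
    (H : ℕ) (hH : 1 ≤ H) (a A C : ℝ) (ha : 4 * H / γ < a) (hA : 0 < A)
    (hC : 4 * a * γ * (1 - γ ^ 2) / (a * γ - 4 * H) ≤ C)
    (t : ℕ → ℕ) (ht1 : t 1 ≤ H) (htgap : ∀ i, 1 ≤ i → t (i + 1) ≤ t i + H)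
    (b : ℕ → ℝ) (hbnn : ∀ i, 0 ≤ b i)
    (hb1 : b 1 ≤ (1 - γ) * (1 / a) ^ 2 * A)
    (hrec : ∀ i, 1 ≤ i →
      b (i + 1) ≤ (1 - γ / 2) * b i + 2 * (1 - γ ^ 2) / γ * (1 / (a + t i)) ^ 2 * A) :
    ∀ i, 1 ≤ i → b i ≤ C * (1 / (a + t i)) ^ 2 / γ ^ 2 * A := by
  obtain ⟨hγ0, hγ1⟩ := hγ
  have hH1 : (1 : ℝ) ≤ H := by exact_mod_cast hH
  have haγ : 4 * (H : ℝ) < a * γ := by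
    rw [div_lt_iff₀ hγ0] at ha; linarith
  have ha0 : (0 : ℝ) < a := by nlinarith
  have haH : 4 * (H : ℝ) < a := by nlinarith [mul_le_of_le_one_right ha0.le hγ1]
  have hCn : 4 * a * γ * (1 - γ ^ 2) ≤ C * (a * γ - 4 * H) := by
    rw [div_le_iff₀ (by linarith)] at hC; linarith
  have hγ2 : (0 : ℝ) ≤ 1 - γ ^ 2 := by nlinarith
  have hane : a ≠ 0 := ha0.ne'
  have hγne : γ ≠ 0 := hγ0.ne'
  have hC0 : 0 ≤ C := by
    refine le_of_mul_le_mul_right ?_ (show (0:ℝ) < a * γ - 4 * H by linarith)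
    nlinarith [mul_nonneg (mul_nonneg (by linarith : (0:ℝ) ≤ 4 * a) hγ0.le) hγ2]
  have hCge : 4 * γ * (1 - γ ^ 2) ≤ C := by
    refine le_of_mul_le_mul_right ?_ (show (0:ℝ) < a * γ - 4 * H by linarith)
    nlinarith [mul_nonneg (mul_nonneg hγ0.le hγ2)
      (show (0:ℝ) ≤ a * (1 - γ) + 4 * H by nlinarith)]
  intro i hi
  induction i, hi using Nat.le_induction with
  | base =>
    have ht1' : (t 1 : ℝ) ≤ H := by exact_mod_cast ht1
    have hs : (0 : ℝ) < a + t 1 := by positivity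
    have hsa : a + (t 1 : ℝ) ≤ 2 * a := by linarith
    have key : (1 - γ) * γ ^ 2 * (a + (t 1 : ℝ)) ^ 2 ≤ C * a ^ 2 := by
      have hp : (a + (t 1 : ℝ)) ^ 2 ≤ 4 * a ^ 2 := by nlinarith
      have k1 : (1 - γ) * γ ^ 2 * (a + (t 1 : ℝ)) ^ 2 ≤ (1 - γ) * γ ^ 2 * (4 * a ^ 2) :=
        mul_le_mul_of_nonneg_left hp
          (mul_nonneg (by linarith : (0:ℝ) ≤ 1 - γ) (sq_nonneg γ))
      have k2 : 4 * γ * (1 - γ ^ 2) * a ^ 2 ≤ C * a ^ 2 :=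
        mul_le_mul_of_nonneg_right hCge (sq_nonneg a)
      nlinarith [k1, k2,
        mul_nonneg (mul_nonneg hγ0.le (by linarith : (0:ℝ) ≤ 1 - γ)) (sq_nonneg a)]
    calc b 1 ≤ (1 - γ) * (1 / a) ^ 2 * A := hb1
      _ ≤ C * (1 / (a + t 1)) ^ 2 / γ ^ 2 * A := by
          have e1 : (1 - γ) * (1 / a) ^ 2 * A
              = ((1 - γ) * γ ^ 2 * (a + (t 1 : ℝ)) ^ 2) * (A / (γ ^ 2 * a ^ 2 * (a + (t 1 : ℝ)) ^ 2)) := by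
            field_simp
          have e2 : C * (1 / (a + (t 1 : ℝ))) ^ 2 / γ ^ 2 * A
              = (C * a ^ 2) * (A / (γ ^ 2 * a ^ 2 * (a + (t 1 : ℝ)) ^ 2)) := by
            field_simp
          rw [e1, e2]
          exact mul_le_mul_of_nonneg_right key (by positivity)
  | succ i hi ih =>
    have hgap : (t (i + 1) : ℝ) ≤ (t i : ℝ) + H := by exact_mod_cast htgap i hi
    have hs : (0 : ℝ) < a + t i := by positivity
    have hs' : (0 : ℝ) < a + t (i + 1) := by positivity
    set s : ℝ := a + t i with hsdef
    set s' : ℝ := a + t (i + 1) with hs'def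
    have hle : s' ≤ s + H := by simp only [hsdef, hs'def]; linarith
    have hsa : a ≤ s := by
      simp only [hsdef]; exact le_add_of_nonneg_right (Nat.cast_nonneg _)
    have hL0 : 0 ≤ (1 - γ / 2) * C + 2 * γ * (1 - γ ^ 2) := by nlinarith
    have hQ : ((1 - γ / 2) * C + 2 * γ * (1 - γ ^ 2)) * (2 * a) ≤ C * (2 * a - 4 * H) := by
      linear_combination hCn
    have hdecay : (a - 2 * H) * (s + H) ^ 2 ≤ a * s ^ 2 := by
      nlinarith [mul_le_mul_of_nonneg_right hsa (sq_nonneg (H : ℝ)),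
        mul_le_mul_of_nonneg_left hsa
          (mul_nonneg (by positivity : (0:ℝ) ≤ 2 * (H:ℝ)) hs.le),
        mul_nonneg hs.le (sq_nonneg (H : ℝ)), sq_nonneg (H : ℝ), hH1, hs.le]
    have hpow : s' ^ 2 ≤ (s + H) ^ 2 := by
      apply pow_le_pow_left₀ hs'.le hle
    have hmain : ((1 - γ / 2) * C + 2 * γ * (1 - γ ^ 2)) * s' ^ 2 ≤ C * s ^ 2 := by
      have h1 : ((1 - γ / 2) * C + 2 * γ * (1 - γ ^ 2)) * s' ^ 2 * (2 * a)
          ≤ ((1 - γ / 2) * C + 2 * γ * (1 - γ ^ 2)) * (2 * a) * (s + H) ^ 2 := by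
        have h := mul_le_mul_of_nonneg_right
          (mul_le_mul_of_nonneg_left hpow hL0) (by linarith : (0:ℝ) ≤ 2 * a)
        nlinarith [h]
      have h2 : ((1 - γ / 2) * C + 2 * γ * (1 - γ ^ 2)) * (2 * a) * (s + H) ^ 2
          ≤ C * (2 * a - 4 * H) * (s + H) ^ 2 :=
        mul_le_mul_of_nonneg_right hQ (sq_nonneg _)
      have h3 : C * (2 * a - 4 * H) * (s + H) ^ 2 ≤ C * s ^ 2 * (2 * a) := by
        have h := mul_le_mul_of_nonneg_left hdecay (by linarith : (0:ℝ) ≤ 2 * C)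
        nlinarith [h]
      have hfin := le_trans (le_trans h1 h2) h3
      exact le_of_mul_le_mul_right hfin (by linarith)
    calc b (i + 1) ≤ (1 - γ / 2) * b i + 2 * (1 - γ ^ 2) / γ * (1 / s) ^ 2 * A :=
          hrec i hi
      _ ≤ (1 - γ / 2) * (C * (1 / s) ^ 2 / γ ^ 2 * A) + 2 * (1 - γ ^ 2) / γ * (1 / s) ^ 2 * A := by
          have h : 0 ≤ 1 - γ / 2 := by linarith
          have := mul_le_mul_of_nonneg_left ih h
          linarith
      _ ≤ C * (1 / s') ^ 2 / γ ^ 2 * A := by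
          have e1 : (1 - γ / 2) * (C * (1 / s) ^ 2 / γ ^ 2 * A) + 2 * (1 - γ ^ 2) / γ * (1 / s) ^ 2 * A
              = (((1 - γ / 2) * C + 2 * γ * (1 - γ ^ 2)) * s' ^ 2) * (A / (γ ^ 2 * s ^ 2 * s' ^ 2)) := by
            field_simp
          have e2 : C * (1 / s') ^ 2 / γ ^ 2 * A = (C * s ^ 2) * (A / (γ ^ 2 * s ^ 2 * s' ^ 2)) := by
            field_simp
          rw [e1, e2]
          exact mul_le_mul_of_nonneg_right hmain (by positivity)
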